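/- Let $0 < r < R$ and $0 < r' < R'$. There exists a biholomorphic map from the annulus $\{z \in \mathbb{C} : r < |z| < R\}$ onto the annulus $\{z \in \mathbb{C} : r' < |z| < R'\}$ if and only if $R/r = R'/r'$. -/

import Mathlib

open Complex Set Real Filter Bornology

namespace AnnuliProof






/-- The open annulus `{a < |z| < b}`. -/
def ann (a b : ℝ) : Set ℂ := {z : ℂ | a < ‖z‖ ∧ ‖z‖ < b}

lemma ann_eq_preimage (a b : ℝ) : ann a b = norm ⁻¹' Set.Ioo a b := rfl

lemma isOpen_ann (a b : ℝ) : IsOpen (ann a b) :=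
  isOpen_Ioo.preimage continuous_norm

lemma closure_ann_subset (a b : ℝ) :
    closure (ann a b) ⊆ norm ⁻¹' Set.Icc a b :=
  closure_minimal (fun z hz => ⟨hz.1.le, hz.2.le⟩)
    (isClosed_Icc.preimage continuous_norm)

lemma frontier_ann_subset (a b : ℝ) :
    frontier (ann a b) ⊆ {z : ℂ | ‖z‖ = a ∨ ‖z‖ = b} := by
  intro z hz
  have h1 : z ∈ norm ⁻¹' Set.Icc a b := closure_ann_subset a b hz.1
  have h2 : z ∉ ann a b := by
    intro hm
    exact hz.2 (subset_interior_iff_isOpen.mpr (isOpen_ann a b) hm)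
  rcases h1 with ⟨ha, hb⟩
  rcases eq_or_lt_of_le ha with h | h
  · exact Or.inl h.symm
  rcases eq_or_lt_of_le hb with h' | h'
  · exact Or.inr h'
  exact absurd ⟨h, h'⟩ h2

lemma isPreconnected_ann (a b : ℝ) (ha : 0 ≤ a) : IsPreconnected (ann a b) := by
  have himg : ann a b =
      (fun p : ℝ × ℝ => (p.1 : ℂ) * Complex.exp (p.2 * Complex.I)) ''
        (Set.Ioo a b ×ˢ (Set.univ : Set ℝ)) := by
    ext z
    constructor
    · intro hz
      exact ⟨(‖z‖, Complex.arg z), ⟨hz, trivial⟩,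
        Complex.norm_mul_exp_arg_mul_I z⟩
    · rintro ⟨⟨t, θ⟩, ⟨ht, -⟩, rfl⟩
      have habs : ‖(t : ℂ) * Complex.exp (θ * Complex.I)‖ = t := by
        rw [norm_mul, Complex.norm_exp_ofReal_mul_I, Complex.norm_real, Real.norm_eq_abs,
          _root_.abs_of_nonneg (le_trans ha ht.1.le), mul_one]
      exact ⟨by rw [habs]; exact ht.1, by rw [habs]; exact ht.2⟩
  rw [himg]
  refine IsPreconnected.image ?_ _ ?_
  · exact (isPreconnected_Ioo.prod isPreconnected_univ)
  · refine Continuous.continuousOn ?_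
    exact (Complex.continuous_ofReal.comp continuous_fst).mul
      (Complex.continuous_exp.comp
        ((Complex.continuous_ofReal.comp continuous_snd).mul continuous_const))






lemma isPreconnected_slitAnn (a b : ℝ) (ha : 0 ≤ a) :
    IsPreconnected (ann a b ∩ Complex.slitPlane) := by
  have himg : ann a b ∩ Complex.slitPlane =
      (fun p : ℝ × ℝ => (p.1 : ℂ) * Complex.exp (p.2 * Complex.I)) ''
        (Set.Ioo a b ×ˢ (Set.Ioo (-Real.pi) Real.pi)) := by
    ext z
    constructor
    · rintro ⟨hz, hslit⟩
      refine ⟨(‖z‖, Complex.arg z), ⟨hz, ⟨Complex.neg_pi_lt_arg z, ?_⟩⟩,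
        Complex.norm_mul_exp_arg_mul_I z⟩
      rcases lt_or_eq_of_le (Complex.arg_le_pi z) with h | h
      · exact h
      · exfalso
        rcases Complex.arg_eq_pi_iff.mp h with ⟨hre, him⟩
        rcases Complex.mem_slitPlane_iff.mp hslit with h' | h'
        · linarith
        · exact h' him
    · rintro ⟨⟨t, θ⟩, ⟨ht, hθ⟩, rfl⟩
      have ht0 : 0 < t := lt_of_le_of_lt ha ht.1
      have habs : ‖(t : ℂ) * Complex.exp (θ * Complex.I)‖ = t := by
        rw [norm_mul, Complex.norm_exp_ofReal_mul_I, Complex.norm_real, Real.norm_eq_abs,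
          _root_.abs_of_nonneg ht0.le, mul_one]
      refine ⟨⟨by rw [habs]; exact ht.1, by rw [habs]; exact ht.2⟩, ?_⟩
      rw [Complex.mem_slitPlane_iff]
      have hre : ((t : ℂ) * Complex.exp (θ * Complex.I)).re = t * Real.cos θ := by
        rw [Complex.re_ofReal_mul, Complex.exp_ofReal_mul_I_re]
      have him : ((t : ℂ) * Complex.exp (θ * Complex.I)).im = t * Real.sin θ := by
        rw [Complex.im_ofReal_mul, Complex.exp_ofReal_mul_I_im]
      rcases eq_or_ne θ 0 with h0 | h0
      · left; rw [hre, h0, Real.cos_zero, mul_one]; exact ht0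
      · right; rw [him]
        refine mul_ne_zero (ne_of_gt ht0) ?_
        exact fun hs => h0 ((Real.sin_eq_zero_iff_of_lt_of_lt hθ.1 hθ.2).mp hs)
  rw [himg]
  refine IsPreconnected.image (isPreconnected_Ioo.prod isPreconnected_Ioo) _ ?_
  exact ((Complex.continuous_ofReal.comp continuous_fst).mul
      (Complex.continuous_exp.comp
        ((Complex.continuous_ofReal.comp continuous_snd).mul continuous_const))).continuousOn






lemma alpha_int (ρ : ℝ) (hρ : 1 < ρ) (f : ℂ → ℂ)
    (hf : DifferentiableOn ℂ f (ann 1 ρ)) (α : ℝ)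
    (habs : ∀ z ∈ ann 1 ρ, ‖f z‖ = ‖z‖ ^ α) :
    ∃ n : ℤ, (n : ℝ) = α := by
  set S : Set ℂ := ann 1 ρ ∩ Complex.slitPlane with hS
  have hSopen : IsOpen S := (isOpen_ann 1 ρ).inter Complex.isOpen_slitPlane
  have hSsub : S ⊆ ann 1 ρ := inter_subset_left
  set F : ℂ → ℂ := fun z => f z * Complex.exp (-(α : ℂ) * Complex.log z) with hF
  have hdF : DifferentiableOn ℂ F S := by
    refine (hf.mono hSsub).mul ?_
    intro z hz
    exact (((Complex.differentiableAt_log hz.2).const_mul (-(α : ℂ))).cexp).differentiableWithinAt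
  have hnorm : ∀ z ∈ S, ‖F z‖ = 1 := by
    intro z hz
    have hz1 : (1 : ℝ) < ‖z‖ := (hSsub hz).1
    have hzpos : (0 : ℝ) < ‖z‖ := lt_trans one_pos hz1
    have hre : (-(α : ℂ) * Complex.log z).re = -α * Real.log (‖z‖) := by
      have : (-(α : ℂ)) = ((-α : ℝ) : ℂ) := by push_cast; ring
      rw [this, Complex.re_ofReal_mul, Complex.log_re]
    rw [hF, norm_mul, Complex.norm_exp, hre, habs z (hSsub hz),
      show -α * Real.log (‖z‖) = Real.log (‖z‖) * (-α) by ring,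
      ← Real.rpow_def_of_pos hzpos, ← Real.rpow_add hzpos]
    simp
  -- basepoint
  set s : ℝ := (1 + ρ) / 2 with hs
  have hs1 : 1 < s := by rw [hs]; linarith
  have hsρ : s < ρ := by rw [hs]; linarith
  have hspos : 0 < s := lt_trans one_pos hs1
  have hz₁mem : ((s : ℂ) ∈ S) := by
    constructor
    · constructor <;> rw [Complex.norm_real, Real.norm_eq_abs, _root_.abs_of_nonneg hspos.le] <;> assumption
    · exact Complex.mem_slitPlane_iff.mpr (Or.inl (by simpa using hspos))
  have hmax : IsMaxOn (norm ∘ F) S (s : ℂ) := by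
    intro z hz
    have : ‖F z‖ ≤ ‖F (s : ℂ)‖ := by
      simp [hnorm z hz, hnorm _ hz₁mem]
    exact this
  have hconst := Complex.eqOn_of_isPreconnected_of_isMaxOn_norm
    (isPreconnected_slitAnn 1 ρ zero_le_one) hSopen hdF hz₁mem hmax
  set c : ℂ := F (s : ℂ) with hc
  have hcnorm : ‖c‖ = 1 := hnorm _ hz₁mem
  have hcne : c ≠ 0 := by
    intro h; rw [h] at hcnorm; simp at hcnorm
  have key : ∀ z ∈ S, f z = c * Complex.exp ((α : ℂ) * Complex.log z) := by
    intro z hz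
    have h1 : F z = c := hconst hz
    have h2 : f z * Complex.exp (-(α : ℂ) * Complex.log z) = c := h1
    have h3 := congrArg (· * Complex.exp ((α : ℂ) * Complex.log z)) h2
    rw [mul_assoc, ← Complex.exp_add] at h3
    simpa using h3
  -- approach the slit from both sides
  set z₂ : ℂ := -(s : ℂ) with hz₂
  have hz₂mem : z₂ ∈ ann 1 ρ := by
    constructor <;>
      rw [hz₂, norm_neg, Complex.norm_real, Real.norm_eq_abs, _root_.abs_of_nonneg hspos.le] <;> assumption
  have hfc : ContinuousAt f z₂ :=
    (hf.continuousOn.continuousAt ((isOpen_ann 1 ρ).mem_nhds hz₂mem))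
  set G : ℝ → ℂ := fun θ => c * Complex.exp ((α : ℂ) * (↑(Real.log s) + ↑θ * I)) with hG
  have hGcont : Continuous G := by
    fun_prop
  -- a point on the circle of radius s at angle θ
  set u : ℝ → ℂ := fun θ => (s : ℂ) * Complex.exp (θ * I) with hu
  have hu_abs : ∀ θ : ℝ, ‖u θ‖ = s := by
    intro θ
    rw [hu]
    simp only
    rw [norm_mul, Complex.norm_exp_ofReal_mul_I, Complex.norm_real, Real.norm_eq_abs,
      _root_.abs_of_nonneg hspos.le, mul_one]
  have hu_mem : ∀ θ : ℝ, θ ∈ Set.Ioo (-π) π → θ ≠ 0 → u θ ∈ S := by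
    intro θ hθ hθ0
    refine ⟨⟨?_, ?_⟩, ?_⟩
    · rw [hu_abs θ]; exact hs1
    · rw [hu_abs θ]; exact hsρ
    · rw [Complex.mem_slitPlane_iff]
      right
      rw [hu]
      simp only
      rw [Complex.im_ofReal_mul, Complex.exp_ofReal_mul_I_im]
      exact mul_ne_zero (ne_of_gt hspos)
        (fun hsin => hθ0 ((Real.sin_eq_zero_iff_of_lt_of_lt hθ.1 hθ.2).mp hsin))
  have hfu : ∀ θ : ℝ, θ ∈ Set.Ioo (-π) π → θ ≠ 0 → f (u θ) = G θ := by
    intro θ hθ hθ0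
    have hmem := hu_mem θ hθ hθ0
    have hlog : Complex.log (u θ) = ↑(Real.log s) + ↑θ * I := by
      have harg : Complex.arg (u θ) = θ := by
        rw [hu]
        simp only
        rw [Complex.exp_mul_I]
        push_cast
        rw [Complex.arg_real_mul _ hspos]
        exact Complex.arg_cos_add_sin_mul_I ⟨hθ.1, hθ.2.le⟩
      apply Complex.ext
      · rw [Complex.log_re, hu_abs θ]
        simp
      · rw [Complex.log_im, harg]
        simp
    rw [key _ hmem, hlog]
  -- two sequences of angles tending to π and -π
  have hθseq : ∀ (sgn : ℝ), sgn = 1 ∨ sgn = -1 →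
      f z₂ = G (sgn * π) := by
    intro sgn hsgn
    have hπ1 : (1 : ℝ) < π := by
      have := Real.pi_gt_three; linarith
    set θn : ℕ → ℝ := fun n => sgn * (π - 1 / (n + 1)) with hθn
    have hθlim : Tendsto θn atTop (nhds (sgn * π)) := by
      have h1 : Tendsto (fun n : ℕ => π - 1 / (n + 1)) atTop (nhds π) := by
        have := tendsto_one_div_add_atTop_nhds_zero_nat (𝕜 := ℝ)
        have h2 := (tendsto_const_nhds (x := π) (f := atTop (α := ℕ))).sub this
        simpa using h2
      simpa [hθn, one_div] using h1.const_mul sgn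
    have hθprop : ∀ n : ℕ, θn n ∈ Set.Ioo (-π) π ∧ θn n ≠ 0 := by
      intro n
      have h1 : (0 : ℝ) < 1 / (n + 1) := by positivity
      have h2 : 1 / ((n : ℝ) + 1) ≤ 1 := by
        rw [div_le_one (by positivity)]; linarith [Nat.cast_nonneg (α := ℝ) n]
      have h3 : 0 < π - 1 / (n + 1) := by linarith
      have h4 : π - 1 / (n + 1) < π := by linarith
      rcases hsgn with h | h <;> rw [hθn] <;> subst h <;>
        constructor <;> simp only [one_mul, neg_one_mul, neg_lt_neg_iff] <;>
        first
          | (constructor <;> linarith)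
          | (intro hcon; first | linarith | (rw [neg_eq_zero] at hcon; linarith))
    have hulim : Tendsto (fun n => u (θn n)) atTop (nhds z₂) := by
      have hcont : Continuous u := by fun_prop
      have h1 := (hcont.tendsto (sgn * π)).comp hθlim
      have h2 : u (sgn * π) = z₂ := by
        rw [hu]
        simp only
        rcases hsgn with h | h <;> subst h
        · push_cast
          rw [one_mul, Complex.exp_pi_mul_I]
          ring
        · push_cast
          rw [show ((-1 : ℂ) * π * I) = -(π * I) by ring, Complex.exp_neg, Complex.exp_pi_mul_I]
          norm_num
          exact hz₂.symm
      rw [h2] at h1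
      exact h1
    have hflim : Tendsto (fun n => f (u (θn n))) atTop (nhds (f z₂)) :=
      hfc.tendsto.comp hulim
    have hGlim : Tendsto (fun n => G (θn n)) atTop (nhds (G (sgn * π))) :=
      (hGcont.tendsto (sgn * π)).comp hθlim
    have heq : (fun n => f (u (θn n))) = fun n => G (θn n) := by
      funext n
      exact hfu (θn n) (hθprop n).1 (hθprop n).2
    rw [heq] at hflim
    exact tendsto_nhds_unique hflim hGlim
  have h₁ := hθseq 1 (Or.inl rfl)
  have h₂ := hθseq (-1) (Or.inr rfl)
  rw [h₁] at h₂
  -- G π = G (-π) implies α ∈ ℤ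
  rw [hG] at h₂
  simp only [one_mul, neg_one_mul] at h₂
  have h₃ := mul_left_cancel₀ hcne h₂
  rw [Complex.exp_eq_exp_iff_exists_int] at h₃
  obtain ⟨n, hn⟩ := h₃
  have hπI : ((π : ℂ) * I) ≠ 0 :=
    mul_ne_zero (by exact_mod_cast Real.pi_ne_zero) Complex.I_ne_zero
  have hexp : (α : ℂ) * (↑(Real.log s) + ↑π * I) =
      (α : ℂ) * (↑(Real.log s) + ↑(-π) * I) + n * (2 * π * I) := hn
  push_cast at hexp
  have h5 : ((α : ℂ) - n) * (2 * ↑π * I) = 0 := by linear_combination hexp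
  rcases mul_eq_zero.mp h5 with h6 | h6
  · refine ⟨n, ?_⟩
    have : (α : ℂ) = (n : ℂ) := sub_eq_zero.mp h6
    exact_mod_cast this.symm
  · exact absurd h6 (by
      refine mul_ne_zero (mul_ne_zero two_ne_zero ?_) Complex.I_ne_zero
      exact_mod_cast Real.pi_ne_zero)







lemma le_of_forall_mul {a b : ℝ} (hb : 0 < b) (h : ∀ c : ℝ, 1 < c → a ≤ c * b) : a ≤ b := by
  by_contra hab
  push_neg at hab
  have hab' : 1 < a / b := (one_lt_div hb).mpr hab
  have hc := h ((a / b + 1) / 2) (by linarith)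
  rw [div_mul_eq_mul_div, add_mul, div_mul_cancel₀ _ (ne_of_gt hb)] at hc
  linarith

lemma eventually_pick {P : ℝ → Prop} (h : ∀ᶠ ε in nhds (0 : ℝ), P ε) {b : ℝ} (hb : 0 < b) :
    ∃ ε : ℝ, 0 < ε ∧ ε < b ∧ P ε := by
  rw [Metric.eventually_nhds_iff] at h
  obtain ⟨ε₁, hε₁, hP⟩ := h
  refine ⟨min ε₁ b / 2, by positivity, ?_, ?_⟩
  · have := min_le_right ε₁ b; linarith
  · apply hP
    rw [Real.dist_eq, sub_zero, _root_.abs_of_nonneg (by positivity)]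
    have := min_le_left ε₁ b; linarith

/-- Inner-to-inner boundary behaviour. -/
def InnInn (ρ ρ' : ℝ) (f : ℂ → ℂ) : Prop :=
  ∀ η > (0:ℝ), ∃ δ > (0:ℝ), ∀ z ∈ ann 1 ρ, ‖z‖ < 1 + δ → ‖f z‖ < 1 + η

/-- Outer-to-outer boundary behaviour. -/
def OutOut (ρ ρ' : ℝ) (f : ℂ → ℂ) : Prop :=
  ∀ η > (0:ℝ), ∃ δ > (0:ℝ), ∀ z ∈ ann 1 ρ, ρ - δ < ‖z‖ → ρ' - η < ‖f z‖

def InnOut (ρ ρ' : ℝ) (f : ℂ → ℂ) : Prop :=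
  ∀ η > (0:ℝ), ∃ δ > (0:ℝ), ∀ z ∈ ann 1 ρ, ‖z‖ < 1 + δ → ρ' - η < ‖f z‖

def OutInn (ρ ρ' : ℝ) (f : ℂ → ℂ) : Prop :=
  ∀ η > (0:ℝ), ∃ δ > (0:ℝ), ∀ z ∈ ann 1 ρ, ρ - δ < ‖z‖ → ‖f z‖ < 1 + η

lemma bound_upper (ρ ρ' : ℝ) (hρ : 1 < ρ) (hρ' : 1 < ρ') (f : ℂ → ℂ)
    (hf : DifferentiableOn ℂ f (ann 1 ρ)) (hmap : MapsTo f (ann 1 ρ) (ann 1 ρ'))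
    (hinn : InnInn ρ ρ' f) (z₀ : ℂ) (hz₀ : z₀ ∈ ann 1 ρ) (k m : ℕ)
    (hkm : ρ' ^ m ≤ ρ ^ k) :
    ‖f z₀‖ ^ m ≤ ‖z₀‖ ^ k := by
  have hz₀pos : (0:ℝ) < ‖z₀‖ := lt_trans one_pos hz₀.1
  refine le_of_forall_mul (by positivity) ?_
  intro c hc
  -- choose η
  obtain ⟨η, hη0, hη1, hηc⟩ : ∃ η : ℝ, 0 < η ∧ η < 1 ∧ (1 + η) ^ m < c := by
    have hcont : Tendsto (fun η : ℝ => (1 + η) ^ m) (nhds 0) (nhds ((1 + 0) ^ m)) :=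
      ((continuous_const.add continuous_id).pow m).tendsto 0
    have h1 : ((1:ℝ) + 0) ^ m = 1 := by norm_num
    rw [h1] at hcont
    have hev : ∀ᶠ η in nhds (0:ℝ), (1 + η) ^ m < c := hcont.eventually_lt_const hc
    obtain ⟨ε, h1, h2, h3⟩ := eventually_pick hev one_pos
    exact ⟨ε, h1, h2, h3⟩
  obtain ⟨δ, hδ0, hδ⟩ := hinn η hη0
  -- choose ε
  obtain ⟨ε, hε0, hεlt, hεc⟩ : ∃ ε : ℝ, 0 < ε ∧
      ε < min δ (min (‖z₀‖ - 1) (min (ρ - ‖z₀‖) ((ρ - 1) / 2))) ∧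
      ρ' ^ m / (ρ - ε) ^ k < c := by
    have hcont : Tendsto (fun ε : ℝ => ρ' ^ m / (ρ - ε) ^ k) (nhds 0)
        (nhds (ρ' ^ m / (ρ - 0) ^ k)) := by
      apply Tendsto.div tendsto_const_nhds (((continuous_const.sub continuous_id).pow k).tendsto 0)
      show (ρ - id (0:ℝ)) ^ k ≠ 0
      simp only [id]
      have : (0:ℝ) < ρ - 0 := by linarith
      positivity
    have hle : ρ' ^ m / (ρ - 0) ^ k < c := by
      rw [sub_zero]
      calc ρ' ^ m / ρ ^ k ≤ 1 := by
            rw [div_le_one (by positivity)]; exact hkm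
        _ < c := hc
    have hev := hcont.eventually_lt_const hle
    have hbpos : 0 < min δ (min (‖z₀‖ - 1) (min (ρ - ‖z₀‖) ((ρ - 1) / 2))) := by
      have h1 := hz₀.1; have h2 := hz₀.2
      refine lt_min hδ0 (lt_min (by linarith) (lt_min (by linarith) (by linarith)))
    obtain ⟨ε, h1, h2, h3⟩ := eventually_pick hev hbpos
    exact ⟨ε, h1, h2, h3⟩
  have hεδ : ε < δ := lt_of_lt_of_le hεlt (min_le_left _ _)
  have hεz1 : ε < ‖z₀‖ - 1 :=
    lt_of_lt_of_le hεlt (le_trans (min_le_right _ _) (min_le_left _ _))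
  have hεz2 : ε < ρ - ‖z₀‖ :=
    lt_of_lt_of_le hεlt (le_trans (min_le_right _ _)
      (le_trans (min_le_right _ _) (min_le_left _ _)))
  have hερ : ε < (ρ - 1) / 2 :=
    lt_of_lt_of_le hεlt (le_trans (min_le_right _ _)
      (le_trans (min_le_right _ _) (min_le_right _ _)))
  -- set up maximum principle
  set U : Set ℂ := ann (1 + ε) (ρ - ε) with hU
  set h : ℂ → ℂ := fun z => f z ^ m / z ^ k with hh
  have hUsub : U ⊆ ann 1 ρ := by
    rintro z ⟨h1, h2⟩
    exact ⟨by linarith, by linarith⟩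
  have hd : DifferentiableOn ℂ h (ann 1 ρ) := by
    refine (hf.pow m).div ((differentiable_pow k).differentiableOn) ?_
    intro z hz
    have : z ≠ 0 := by
      intro h0
      rw [h0] at hz
      simp only [ann, norm_zero, mem_setOf_eq] at hz
      linarith [hz.1]
    exact pow_ne_zero k this
  have hclos : closure U ⊆ ann 1 ρ := by
    intro z hz
    have := closure_ann_subset _ _ hz
    exact ⟨by have := this.1; linarith, by have := this.2; linarith⟩
  have hbounded : IsBounded U := by
    refine (Metric.isBounded_closedBall (x := (0:ℂ)) (r := ρ)).subset ?_
    intro z hz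
    rw [Metric.mem_closedBall, Complex.dist_eq, sub_zero]
    exact le_of_lt (lt_of_lt_of_le hz.2 (by linarith))
  have hnorm_h : ∀ z : ℂ, ‖h z‖ = ‖f z‖ ^ m / ‖z‖ ^ k := by
    intro z
    rw [hh]
    simp only
    rw [norm_div, norm_pow, norm_pow]
  have hfr : ∀ z ∈ frontier U, ‖h z‖ ≤ c := by
    intro z hz
    rcases frontier_ann_subset _ _ hz with h1 | h1
    · -- inner circle
      have hzmem : z ∈ ann 1 ρ := ⟨by rw [h1]; linarith, by rw [h1]; linarith⟩
      have hfz : ‖f z‖ < 1 + η := hδ z hzmem (by rw [h1]; linarith)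
      rw [hnorm_h]
      rw [div_le_iff₀ (by rw [h1]; positivity)]
      calc ‖f z‖ ^ m ≤ (1 + η) ^ m := by
            apply pow_le_pow_left₀ (norm_nonneg _) hfz.le
        _ ≤ c := hηc.le
        _ ≤ c * ‖z‖ ^ k := by
            nth_rewrite 1 [← mul_one c]
            refine mul_le_mul_of_nonneg_left ?_ (by linarith)
            exact one_le_pow₀ (by rw [h1]; linarith)
    · -- outer circle
      have hzmem : z ∈ ann 1 ρ := ⟨by rw [h1]; linarith, by rw [h1]; linarith⟩
      have hfz : ‖f z‖ < ρ' := (hmap hzmem).2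
      rw [hnorm_h, h1]
      calc ‖f z‖ ^ m / (ρ - ε) ^ k ≤ ρ' ^ m / (ρ - ε) ^ k := by
            have hden : (0:ℝ) < (ρ - ε) ^ k := by
              have : (0:ℝ) < ρ - ε := by linarith
              positivity
            gcongr

        _ ≤ c := hεc.le
  have hz₀U : z₀ ∈ U := ⟨by linarith, by linarith⟩
  have hmain := Complex.norm_le_of_forall_mem_frontier_norm_le hbounded
    ⟨hd.mono hUsub, (hd.continuousOn).mono hclos⟩ hfr (subset_closure hz₀U)
  rw [hnorm_h] at hmain
  rw [div_le_iff₀ (by positivity)] at hmain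
  linarith [hmain]

lemma bound_lower (ρ ρ' : ℝ) (hρ : 1 < ρ) (hρ' : 1 < ρ') (f : ℂ → ℂ)
    (hf : DifferentiableOn ℂ f (ann 1 ρ)) (hmap : MapsTo f (ann 1 ρ) (ann 1 ρ'))
    (hout : OutOut ρ ρ' f) (z₀ : ℂ) (hz₀ : z₀ ∈ ann 1 ρ) (k m : ℕ)
    (hkm : ρ ^ m ≤ ρ' ^ k) :
    ‖z₀‖ ^ m ≤ ‖f z₀‖ ^ k := by
  have hfz₀pos : (0:ℝ) < ‖f z₀‖ := lt_trans one_pos (hmap hz₀).1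
  refine le_of_forall_mul (by positivity) ?_
  intro c hc
  -- choose η
  obtain ⟨η, hη0, hη1, hηc⟩ : ∃ η : ℝ, 0 < η ∧ η < ρ' - 1 ∧ ρ ^ m / (ρ' - η) ^ k < c := by
    have hcont : Tendsto (fun η : ℝ => ρ ^ m / (ρ' - η) ^ k) (nhds 0)
        (nhds (ρ ^ m / (ρ' - 0) ^ k)) := by
      apply Tendsto.div tendsto_const_nhds (((continuous_const.sub continuous_id).pow k).tendsto 0)
      show (ρ' - id (0:ℝ)) ^ k ≠ 0
      simp only [id]
      have : (0:ℝ) < ρ' - 0 := by linarith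
      positivity
    have hle : ρ ^ m / (ρ' - 0) ^ k < c := by
      rw [sub_zero]
      calc ρ ^ m / ρ' ^ k ≤ 1 := by
            rw [div_le_one (by positivity)]; exact hkm
        _ < c := hc
    obtain ⟨ε, h1, h2, h3⟩ := eventually_pick (hcont.eventually_lt_const hle)
      (show (0:ℝ) < ρ' - 1 by linarith)
    exact ⟨ε, h1, h2, h3⟩
  obtain ⟨δ, hδ0, hδ⟩ := hout η hη0
  -- choose ε
  obtain ⟨ε, hε0, hεlt, hεc⟩ : ∃ ε : ℝ, 0 < ε ∧
      ε < min δ (min (‖z₀‖ - 1) (min (ρ - ‖z₀‖) ((ρ - 1) / 2))) ∧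
      (1 + ε) ^ m < c := by
    have hcont : Tendsto (fun ε : ℝ => (1 + ε) ^ m) (nhds 0) (nhds ((1 + 0) ^ m)) :=
      ((continuous_const.add continuous_id).pow m).tendsto 0
    have h1 : ((1:ℝ) + 0) ^ m = 1 := by norm_num
    rw [h1] at hcont
    have hbpos : 0 < min δ (min (‖z₀‖ - 1) (min (ρ - ‖z₀‖) ((ρ - 1) / 2))) := by
      have h1 := hz₀.1; have h2 := hz₀.2
      refine lt_min hδ0 (lt_min (by linarith) (lt_min (by linarith) (by linarith)))
    obtain ⟨ε, h1, h2, h3⟩ := eventually_pick (hcont.eventually_lt_const hc) hbpos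
    exact ⟨ε, h1, h2, h3⟩
  have hεδ : ε < δ := lt_of_lt_of_le hεlt (min_le_left _ _)
  have hεz1 : ε < ‖z₀‖ - 1 :=
    lt_of_lt_of_le hεlt (le_trans (min_le_right _ _) (min_le_left _ _))
  have hεz2 : ε < ρ - ‖z₀‖ :=
    lt_of_lt_of_le hεlt (le_trans (min_le_right _ _)
      (le_trans (min_le_right _ _) (min_le_left _ _)))
  have hερ : ε < (ρ - 1) / 2 :=
    lt_of_lt_of_le hεlt (le_trans (min_le_right _ _)
      (le_trans (min_le_right _ _) (min_le_right _ _)))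
  set U : Set ℂ := ann (1 + ε) (ρ - ε) with hU
  set h : ℂ → ℂ := fun z => z ^ m / f z ^ k with hh
  have hUsub : U ⊆ ann 1 ρ := by
    rintro z ⟨h1, h2⟩
    exact ⟨by linarith, by linarith⟩
  have hd : DifferentiableOn ℂ h (ann 1 ρ) := by
    refine ((differentiable_pow m).differentiableOn).div (hf.pow k) ?_
    intro z hz
    have : f z ≠ 0 := by
      intro h0
      have := (hmap hz).1
      rw [h0] at this
      simp at this
      linarith
    exact pow_ne_zero k this
  have hclos : closure U ⊆ ann 1 ρ := by
    intro z hz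
    have := closure_ann_subset _ _ hz
    exact ⟨by have := this.1; linarith, by have := this.2; linarith⟩
  have hbounded : IsBounded U := by
    refine (Metric.isBounded_closedBall (x := (0:ℂ)) (r := ρ)).subset ?_
    intro z hz
    rw [Metric.mem_closedBall, Complex.dist_eq, sub_zero]
    exact le_of_lt (lt_of_lt_of_le hz.2 (by linarith))
  have hnorm_h : ∀ z : ℂ, ‖h z‖ = ‖z‖ ^ m / ‖f z‖ ^ k := by
    intro z
    rw [hh]
    simp only
    rw [norm_div, norm_pow, norm_pow]
  have hfr : ∀ z ∈ frontier U, ‖h z‖ ≤ c := by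
    intro z hz
    rcases frontier_ann_subset _ _ hz with h1 | h1
    · -- inner circle
      have hzmem : z ∈ ann 1 ρ := ⟨by rw [h1]; linarith, by rw [h1]; linarith⟩
      have hfz : (1:ℝ) < ‖f z‖ := (hmap hzmem).1
      rw [hnorm_h, h1]
      rw [div_le_iff₀ (by positivity)]
      calc (1 + ε) ^ m ≤ c := hεc.le
        _ ≤ c * ‖f z‖ ^ k := by
            nth_rewrite 1 [← mul_one c]
            refine mul_le_mul_of_nonneg_left ?_ (by linarith)
            exact one_le_pow₀ hfz.le
    · -- outer circle
      have hzmem : z ∈ ann 1 ρ := ⟨by rw [h1]; linarith, by rw [h1]; linarith⟩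
      have hfz : ρ' - η < ‖f z‖ := hδ z hzmem (by rw [h1]; linarith)
      have hρ'η : (0:ℝ) < ρ' - η := by linarith
      rw [hnorm_h, h1]
      calc (ρ - ε) ^ m / ‖f z‖ ^ k ≤ ρ ^ m / (ρ' - η) ^ k := by
            gcongr
            all_goals first | linarith | exact hfz.le
        _ ≤ c := hηc.le
  have hz₀U : z₀ ∈ U := ⟨by linarith, by linarith⟩
  have hmain := Complex.norm_le_of_forall_mem_frontier_norm_le hbounded
    ⟨hd.mono hUsub, (hd.continuousOn).mono hclos⟩ hfr (subset_closure hz₀U)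
  rw [hnorm_h] at hmain
  rw [div_le_iff₀ (by positivity)] at hmain
  linarith [hmain]

lemma abs_eq_rpow (ρ ρ' : ℝ) (hρ : 1 < ρ) (hρ' : 1 < ρ') (f : ℂ → ℂ)
    (hf : DifferentiableOn ℂ f (ann 1 ρ)) (hmap : MapsTo f (ann 1 ρ) (ann 1 ρ'))
    (hinn : InnInn ρ ρ' f) (hout : OutOut ρ ρ' f) (z₀ : ℂ) (hz₀ : z₀ ∈ ann 1 ρ) :
    ‖f z₀‖ = ‖z₀‖ ^ (Real.log ρ' / Real.log ρ) := by
  set α : ℝ := Real.log ρ' / Real.log ρ with hα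
  have hlρ : 0 < Real.log ρ := Real.log_pos hρ
  have hlρ' : 0 < Real.log ρ' := Real.log_pos hρ'
  have hα0 : 0 < α := div_pos hlρ' hlρ
  set a : ℝ := ‖z₀‖ with ha
  set b : ℝ := ‖f z₀‖ with hb
  have ha1 : 1 < a := hz₀.1
  have hb1 : 1 < b := (hmap hz₀).1
  have ha0 : 0 < a := lt_trans one_pos ha1
  have hb0 : 0 < b := lt_trans one_pos hb1
  have hρ0 : 0 < ρ := lt_trans one_pos hρ
  have hρ'0 : 0 < ρ' := lt_trans one_pos hρ'
  -- continuity of t ↦ a ^ t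
  have hacont : Continuous (fun t : ℝ => a ^ t) := by
    have heq : (fun t : ℝ => a ^ t) = fun t => Real.exp (Real.log a * t) :=
      funext fun t => Real.rpow_def_of_pos ha0 t
    rw [heq]
    exact Real.continuous_exp.comp (continuous_const.mul continuous_id)
  -- upper bound for rationals above α
  have hup : ∀ q : ℚ, α < (q : ℝ) → b ≤ a ^ (q : ℝ) := by
    intro q hq
    have hq0 : 0 < q := by
      have : (0:ℝ) < q := lt_trans hα0 hq
      exact_mod_cast this
    set k : ℕ := q.num.toNat with hk
    set m : ℕ := q.den with hm
    have hm0 : 0 < m := q.pos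
    have hknum : (k : ℝ) = (q.num : ℝ) := by
      rw [hk]
      exact_mod_cast Int.toNat_of_nonneg (le_of_lt (Rat.num_pos.mpr hq0))
    have hqkm : (q : ℝ) = (k : ℝ) / (m : ℝ) := by
      rw [hknum, hm]
      exact_mod_cast (Rat.num_div_den q).symm
    have hm0' : (0:ℝ) < (m:ℝ) := by exact_mod_cast hm0
    have hkm : ρ' ^ m ≤ ρ ^ k := by
      rw [← Real.log_le_log_iff (by positivity) (by positivity),
        Real.log_pow, Real.log_pow]
      have h2 : α ≤ (k:ℝ)/(m:ℝ) := le_of_lt (by rw [← hqkm]; exact hq)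
      rw [hα, div_le_div_iff₀ hlρ hm0'] at h2
      linarith
    have hpow := bound_upper ρ ρ' hρ hρ' f hf hmap hinn z₀ hz₀ k m hkm
    -- b ^ m ≤ a ^ k implies b ≤ a ^ (k/m)
    have h3 : b ^ m ≤ (a ^ ((k:ℝ)/(m:ℝ))) ^ m := by
      have h4 : (a ^ ((k:ℝ)/(m:ℝ))) ^ m = a ^ (k:ℕ) := by
        rw [← Real.rpow_natCast (a ^ ((k:ℝ)/(m:ℝ))) m, ← Real.rpow_mul ha0.le,
          div_mul_cancel₀ _ (ne_of_gt hm0'), Real.rpow_natCast]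
      rw [h4]
      exact hpow
    have h5 : b ≤ a ^ ((k:ℝ)/(m:ℝ)) :=
      (pow_le_pow_iff_left₀ hb0.le (Real.rpow_nonneg ha0.le _) (ne_of_gt hm0)).mp h3
    rwa [hqkm]
  -- lower bound for rationals below α
  have hlow : ∀ q : ℚ, 0 < (q:ℝ) → (q:ℝ) < α → a ^ (q : ℝ) ≤ b := by
    intro q hq0' hq
    have hq0 : 0 < q := by exact_mod_cast hq0'
    set m : ℕ := q.num.toNat with hm'
    set k : ℕ := q.den with hk'
    have hk0 : 0 < k := q.pos
    have hmnum : (m : ℝ) = (q.num : ℝ) := by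
      rw [hm']
      exact_mod_cast Int.toNat_of_nonneg (le_of_lt (Rat.num_pos.mpr hq0))
    have hqkm : (q : ℝ) = (m : ℝ) / (k : ℝ) := by
      rw [hmnum, hk']
      exact_mod_cast (Rat.num_div_den q).symm
    have hk0' : (0:ℝ) < (k:ℝ) := by exact_mod_cast hk0
    have hkm : ρ ^ m ≤ ρ' ^ k := by
      rw [← Real.log_le_log_iff (by positivity) (by positivity),
        Real.log_pow, Real.log_pow]
      have h2 : (m:ℝ)/(k:ℝ) ≤ α := le_of_lt (by rw [← hqkm]; exact hq)
      rw [hα, div_le_div_iff₀ hk0' hlρ] at h2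
      linarith
    have hpow := bound_lower ρ ρ' hρ hρ' f hf hmap hout z₀ hz₀ k m hkm
    have h3 : (a ^ ((m:ℝ)/(k:ℝ))) ^ k ≤ b ^ k := by
      have h4 : (a ^ ((m:ℝ)/(k:ℝ))) ^ k = a ^ (m:ℕ) := by
        rw [← Real.rpow_natCast (a ^ ((m:ℝ)/(k:ℝ))) k, ← Real.rpow_mul ha0.le,
          div_mul_cancel₀ _ (ne_of_gt hk0'), Real.rpow_natCast]
      rw [h4]
      exact hpow
    have h5 : a ^ ((m:ℝ)/(k:ℝ)) ≤ b :=
      (pow_le_pow_iff_left₀ (Real.rpow_nonneg ha0.le _) hb0.le (ne_of_gt hk0)).mp h3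
    rwa [hqkm]
  -- combine
  refine le_antisymm ?_ ?_
  · by_contra hcon
    push_neg at hcon
    have hev : ∀ᶠ t in nhds α, a ^ t < b := (hacont.tendsto α).eventually_lt_const hcon
    obtain ⟨t, ht, htb⟩ := hev.exists_gt
    obtain ⟨q, hq1, hq2⟩ := exists_rat_btwn ht
    have h1 := hup q hq1
    have h2 : a ^ (q:ℝ) ≤ a ^ t := (Real.rpow_le_rpow_left_iff ha1).mpr hq2.le
    linarith
  · by_contra hcon
    push_neg at hcon
    have hev : ∀ᶠ t in nhds α, b < a ^ t := (hacont.tendsto α).eventually_const_lt hcon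
    obtain ⟨t, ht, htb⟩ := hev.exists_lt
    set t₀ : ℝ := max t (α / 2) with ht₀
    have ht₀α : t₀ < α := max_lt ht (by linarith)
    have ht₀b : b < a ^ t₀ :=
      lt_of_lt_of_le htb ((Real.rpow_le_rpow_left_iff ha1).mpr (le_max_left _ _))
    obtain ⟨q, hq1, hq2⟩ := exists_rat_btwn ht₀α
    have hq0 : (0:ℝ) < (q:ℝ) := by
      have h3 : α / 2 ≤ t₀ := le_max_right _ _
      linarith
    have h1 := hlow q hq0 hq2
    have h2 : a ^ t₀ ≤ a ^ (q:ℝ) := (Real.rpow_le_rpow_left_iff ha1).mpr hq1.le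
    linarith






lemma proper (ρ ρ' : ℝ) (hρ : 1 < ρ) (hρ' : 1 < ρ') (f g : ℂ → ℂ)
    (hgc : ContinuousOn g (ann 1 ρ')) (hgmap : MapsTo g (ann 1 ρ') (ann 1 ρ))
    (hgf : ∀ z ∈ ann 1 ρ, g (f z) = z) :
    ∀ η > (0:ℝ), η < ρ' - 1 → ∃ δ > (0:ℝ), δ < (ρ - 1) / 2 ∧
      ∀ z ∈ ann 1 ρ, (‖z‖ < 1 + δ ∨ ρ - δ < ‖z‖) →
        (‖f z‖ < 1 + η ∨ ρ' - η < ‖f z‖) := by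
  intro η hη hηρ'
  set K' : Set ℂ := norm ⁻¹' Set.Icc (1 + η) (ρ' - η) with hK'
  have hK'cpt : IsCompact K' := by
    apply Metric.isCompact_of_isClosed_isBounded
    · exact isClosed_Icc.preimage continuous_norm
    · refine (Metric.isBounded_closedBall (x := (0:ℂ)) (r := ρ')).subset ?_
      intro z hz
      rw [Metric.mem_closedBall, Complex.dist_eq, sub_zero]
      exact le_trans hz.2 (by linarith)
  have hK'sub : K' ⊆ ann 1 ρ' := by
    rintro z ⟨h1, h2⟩
    exact ⟨by linarith, by linarith⟩
  set K : Set ℂ := g '' K' with hK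
  have hKcpt : IsCompact K := hK'cpt.image_of_continuousOn (hgc.mono hK'sub)
  have hKsub : K ⊆ ann 1 ρ := by
    rintro w ⟨z, hz, rfl⟩
    exact hgmap (hK'sub hz)
  obtain ⟨δ, hδ0, hδρ, hδK⟩ : ∃ δ > (0:ℝ), δ < (ρ - 1) / 2 ∧
      ∀ w ∈ K, 1 + δ ≤ ‖w‖ ∧ ‖w‖ ≤ ρ - δ := by
    rcases K.eq_empty_or_nonempty with hKe | hKne
    · exact ⟨(ρ - 1) / 4, by linarith, by linarith, fun w hw => by rw [hKe] at hw; exact hw.elim⟩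
    · obtain ⟨w₁, hw₁K, hw₁⟩ := hKcpt.exists_isMinOn hKne
        (continuous_norm.continuousOn)
      obtain ⟨w₂, hw₂K, hw₂⟩ := hKcpt.exists_isMaxOn hKne
        (continuous_norm.continuousOn)
      have h₁ : 1 < ‖w₁‖ := (hKsub hw₁K).1
      have h₂ : ‖w₂‖ < ρ := (hKsub hw₂K).2
      refine ⟨min (min (‖w₁‖ - 1) (ρ - ‖w₂‖)) ((ρ - 1) / 2) / 2,
        by refine div_pos (lt_min (lt_min ?_ ?_) ?_) two_pos <;> linarith, ?_, ?_⟩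
      · have := min_le_right (min (‖w₁‖ - 1) (ρ - ‖w₂‖)) ((ρ - 1) / 2)
        linarith
      · intro w hw
        have ha := hw₁ hw
        have hb := hw₂ hw
        simp only [mem_setOf_eq] at ha hb
        have hl1 : min (min (‖w₁‖ - 1) (ρ - ‖w₂‖)) ((ρ - 1) / 2)
            ≤ ‖w₁‖ - 1 := le_trans (min_le_left _ _) (min_le_left _ _)
        have hl2 : min (min (‖w₁‖ - 1) (ρ - ‖w₂‖)) ((ρ - 1) / 2)
            ≤ ρ - ‖w₂‖ := le_trans (min_le_left _ _) (min_le_right _ _)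
        constructor <;> [skip; skip] <;> [linarith; linarith]
  refine ⟨δ, hδ0, hδρ, ?_⟩
  intro z hz hznear
  by_contra hcon
  push_neg at hcon
  have hfzK' : f z ∈ K' := ⟨hcon.1, hcon.2⟩
  have hzK : z ∈ K := ⟨f z, hfzK', hgf z hz⟩
  have := hδK z hzK
  rcases hznear with h | h
  · linarith [this.1]
  · linarith [this.2]

lemma dich_inner (ρ ρ' : ℝ) (hρ : 1 < ρ) (hρ' : 1 < ρ') (f g : ℂ → ℂ)
    (hfc : ContinuousOn f (ann 1 ρ))
    (hgc : ContinuousOn g (ann 1 ρ')) (hgmap : MapsTo g (ann 1 ρ') (ann 1 ρ))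
    (hgf : ∀ z ∈ ann 1 ρ, g (f z) = z) :
    InnInn ρ ρ' f ∨ InnOut ρ ρ' f := by
  by_cases hII : InnInn ρ ρ' f
  · exact Or.inl hII
  right
  rw [InnInn] at hII
  push_neg at hII
  obtain ⟨η₀, hη₀0, hη₀⟩ := hII
  intro η hη
  set η1 : ℝ := min (min η η₀) ((ρ' - 1) / 4) with hη1def
  have hη10 : 0 < η1 := lt_min (lt_min hη hη₀0) (by linarith)
  have hη1η : η1 ≤ η := le_trans (min_le_left _ _) (min_le_left _ _)
  have hη1η₀ : η1 ≤ η₀ := le_trans (min_le_left _ _) (min_le_right _ _)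
  have hη1ρ' : η1 ≤ (ρ' - 1) / 4 := min_le_right _ _
  obtain ⟨δ, hδ0, hδρ, hδ⟩ := proper ρ ρ' hρ hρ' f g hgc hgmap hgf η1 hη10 (by linarith)
  set T : Set ℂ := ann 1 (1 + δ) with hT
  have hTsub : T ⊆ ann 1 ρ := by
    rintro z ⟨h1, h2⟩
    exact ⟨h1, by linarith⟩
  set U : Set ℂ := ann 1 ρ ∩ f ⁻¹' (norm ⁻¹' Set.Iio (1 + η1)) with hU
  set V : Set ℂ := ann 1 ρ ∩ f ⁻¹' (norm ⁻¹' Set.Ioi (ρ' - η1)) with hV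
  have hUopen : IsOpen U :=
    hfc.isOpen_inter_preimage (isOpen_ann 1 ρ) (isOpen_Iio.preimage continuous_norm)
  have hVopen : IsOpen V :=
    hfc.isOpen_inter_preimage (isOpen_ann 1 ρ) (isOpen_Ioi.preimage continuous_norm)
  have hdisj : Disjoint U V := by
    rw [Set.disjoint_left]
    rintro z ⟨-, h1⟩ ⟨-, h2⟩
    simp only [mem_preimage, mem_Iio, mem_Ioi] at h1 h2
    have : (1:ℝ) + η1 ≤ ρ' - η1 := by linarith
    linarith
  have hcover : T ⊆ U ∪ V := by
    intro z hzT
    have hz := hTsub hzT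
    rcases hδ z hz (Or.inl hzT.2) with h | h
    · exact Or.inl ⟨hz, h⟩
    · exact Or.inr ⟨hz, h⟩
  rcases (isPreconnected_ann 1 (1 + δ) zero_le_one).subset_or_subset hUopen hVopen
      hdisj hcover with hsub | hsub
  · exfalso
    obtain ⟨z, hzann, hzδ, hzf⟩ := hη₀ δ hδ0
    have hzT : z ∈ T := ⟨hzann.1, hzδ⟩
    have := (hsub hzT).2
    simp only [mem_preimage, mem_Iio] at this
    linarith
  · refine ⟨δ, hδ0, ?_⟩
    intro z hz hzδ
    have hzT : z ∈ T := ⟨hz.1, hzδ⟩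
    have := (hsub hzT).2
    simp only [mem_preimage, mem_Ioi] at this
    linarith

lemma dich_outer (ρ ρ' : ℝ) (hρ : 1 < ρ) (hρ' : 1 < ρ') (f g : ℂ → ℂ)
    (hfc : ContinuousOn f (ann 1 ρ))
    (hgc : ContinuousOn g (ann 1 ρ')) (hgmap : MapsTo g (ann 1 ρ') (ann 1 ρ))
    (hgf : ∀ z ∈ ann 1 ρ, g (f z) = z) :
    OutOut ρ ρ' f ∨ OutInn ρ ρ' f := by
  by_cases hOO : OutOut ρ ρ' f
  · exact Or.inl hOO
  right
  rw [OutOut] at hOO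
  push_neg at hOO
  obtain ⟨η₀, hη₀0, hη₀⟩ := hOO
  intro η hη
  set η1 : ℝ := min (min η η₀) ((ρ' - 1) / 4) with hη1def
  have hη10 : 0 < η1 := lt_min (lt_min hη hη₀0) (by linarith)
  have hη1η : η1 ≤ η := le_trans (min_le_left _ _) (min_le_left _ _)
  have hη1η₀ : η1 ≤ η₀ := le_trans (min_le_left _ _) (min_le_right _ _)
  have hη1ρ' : η1 ≤ (ρ' - 1) / 4 := min_le_right _ _
  obtain ⟨δ, hδ0, hδρ, hδ⟩ := proper ρ ρ' hρ hρ' f g hgc hgmap hgf η1 hη10 (by linarith)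
  set T : Set ℂ := ann (ρ - δ) ρ with hT
  have hTsub : T ⊆ ann 1 ρ := by
    rintro z ⟨h1, h2⟩
    exact ⟨by linarith, h2⟩
  set U : Set ℂ := ann 1 ρ ∩ f ⁻¹' (norm ⁻¹' Set.Iio (1 + η1)) with hU
  set V : Set ℂ := ann 1 ρ ∩ f ⁻¹' (norm ⁻¹' Set.Ioi (ρ' - η1)) with hV
  have hUopen : IsOpen U :=
    hfc.isOpen_inter_preimage (isOpen_ann 1 ρ) (isOpen_Iio.preimage continuous_norm)
  have hVopen : IsOpen V :=
    hfc.isOpen_inter_preimage (isOpen_ann 1 ρ) (isOpen_Ioi.preimage continuous_norm)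
  have hdisj : Disjoint U V := by
    rw [Set.disjoint_left]
    rintro z ⟨-, h1⟩ ⟨-, h2⟩
    simp only [mem_preimage, mem_Iio, mem_Ioi] at h1 h2
    have : (1:ℝ) + η1 ≤ ρ' - η1 := by linarith
    linarith
  have hcover : T ⊆ U ∪ V := by
    intro z hzT
    have hz := hTsub hzT
    rcases hδ z hz (Or.inr hzT.1) with h | h
    · exact Or.inl ⟨hz, h⟩
    · exact Or.inr ⟨hz, h⟩
  rcases (isPreconnected_ann (ρ - δ) ρ (by linarith)).subset_or_subset hUopen hVopen
      hdisj hcover with hsub | hsub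
  · refine ⟨δ, hδ0, ?_⟩
    intro z hz hzδ
    have hzT : z ∈ T := ⟨hzδ, hz.2⟩
    have := (hsub hzT).2
    simp only [mem_preimage, mem_Iio] at this
    linarith
  · exfalso
    obtain ⟨z, hzann, hzδ, hzf⟩ := hη₀ δ hδ0
    have hzT : z ∈ T := ⟨hzδ, hzann.2⟩
    have := (hsub hzT).2
    simp only [mem_preimage, mem_Ioi] at this
    linarith

lemma excl_inn (ρ ρ' : ℝ) (hρ : 1 < ρ) (hρ' : 1 < ρ') (f g : ℂ → ℂ)
    (hfc : ContinuousOn f (ann 1 ρ)) (hfmap : MapsTo f (ann 1 ρ) (ann 1 ρ'))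
    (hgmap : MapsTo g (ann 1 ρ') (ann 1 ρ))
    (hfg : ∀ w ∈ ann 1 ρ', f (g w) = w)
    (hII : InnInn ρ ρ' f) (hOI : OutInn ρ ρ' f) : False := by
  set η : ℝ := (ρ' - 1) / 2 with hηdef
  have hη0 : 0 < η := by rw [hηdef]; linarith
  obtain ⟨δi, hδi0, hδi⟩ := hII η hη0
  obtain ⟨δo, hδo0, hδo⟩ := hOI η hη0
  set δ : ℝ := min (min δi δo) ((ρ - 1) / 2) / 2 with hδdef
  have hδ0 : 0 < δ := by
    rw [hδdef]
    refine div_pos (lt_min (lt_min hδi0 hδo0) (by linarith)) two_pos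
  have hδρ : δ < (ρ - 1) / 2 := by
    have := min_le_right (min δi δo) ((ρ - 1) / 2)
    rw [hδdef]; linarith
  have hδδi : δ ≤ δi := by
    have := le_trans (min_le_left (min δi δo) ((ρ - 1) / 2)) (min_le_left δi δo)
    rw [hδdef]; linarith
  have hδδo : δ ≤ δo := by
    have := le_trans (min_le_left (min δi δo) ((ρ - 1) / 2)) (min_le_right δi δo)
    rw [hδdef]; linarith
  set M : Set ℂ := norm ⁻¹' Set.Icc (1 + δ) (ρ - δ) with hM
  have hMsub : M ⊆ ann 1 ρ := by
    rintro z ⟨h1, h2⟩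
    exact ⟨by linarith, by linarith⟩
  have hMcpt : IsCompact M := by
    apply Metric.isCompact_of_isClosed_isBounded
    · exact isClosed_Icc.preimage continuous_norm
    · refine (Metric.isBounded_closedBall (x := (0:ℂ)) (r := ρ)).subset ?_
      intro z hz
      rw [Metric.mem_closedBall, Complex.dist_eq, sub_zero]
      exact le_trans hz.2 (by linarith)
  have hMne : M.Nonempty := by
    refine ⟨(((1 + ρ) / 2 : ℝ) : ℂ), ?_⟩
    have : ‖(((1 + ρ) / 2 : ℝ) : ℂ)‖ = (1 + ρ) / 2 := by
      rw [Complex.norm_real, Real.norm_eq_abs, _root_.abs_of_nonneg (by linarith)]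
    exact ⟨by rw [this]; linarith, by rw [this]; linarith⟩
  obtain ⟨zM, hzM, hzmax⟩ := hMcpt.exists_isMaxOn hMne
    ((continuous_norm.comp_continuousOn (hfc.mono hMsub)))
  set c : ℝ := ‖f zM‖ with hc
  have hcρ' : c < ρ' := (hfmap (hMsub hzM)).2
  set x : ℝ := (max c (1 + η) + ρ') / 2 with hx
  have hmaxρ' : max c (1 + η) < ρ' := by
    refine max_lt hcρ' (by rw [hηdef]; linarith)
  have hx1 : 1 < x := by
    have h1 : (1:ℝ) + η ≤ max c (1 + η) := le_max_right _ _
    rw [hx, hηdef] at *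
    linarith
  have hxρ' : x < ρ' := by rw [hx]; linarith
  set w : ℂ := ((x : ℝ) : ℂ) with hw
  have hwabs : ‖w‖ = x := by
    rw [hw, Complex.norm_real, Real.norm_eq_abs, _root_.abs_of_nonneg (by linarith)]
  have hwann : w ∈ ann 1 ρ' := ⟨by rw [hwabs]; exact hx1, by rw [hwabs]; exact hxρ'⟩
  have hzann : g w ∈ ann 1 ρ := hgmap hwann
  have hfgw : f (g w) = w := hfg w hwann
  have hxmax : max c (1 + η) < x := by rw [hx]; linarith
  rcases lt_or_ge (‖g w‖) (1 + δ) with h | h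
  · have := hδi (g w) hzann (by linarith)
    rw [hfgw, hwabs] at this
    have h2 : (1:ℝ) + η ≤ max c (1 + η) := le_max_right _ _
    linarith
  rcases lt_or_ge (ρ - δ) (‖g w‖) with h' | h'
  · have := hδo (g w) hzann (by linarith)
    rw [hfgw, hwabs] at this
    have h2 : (1:ℝ) + η ≤ max c (1 + η) := le_max_right _ _
    linarith
  · have hgwM : g w ∈ M := ⟨h, h'⟩
    have := hzmax hgwM
    simp only [Function.comp_apply, mem_setOf_eq] at this
    rw [hfgw, hwabs] at this
    have h2 : c ≤ max c (1 + η) := le_max_left _ _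
    linarith

lemma excl_out (ρ ρ' : ℝ) (hρ : 1 < ρ) (hρ' : 1 < ρ') (f g : ℂ → ℂ)
    (hfc : ContinuousOn f (ann 1 ρ)) (hfmap : MapsTo f (ann 1 ρ) (ann 1 ρ'))
    (hgmap : MapsTo g (ann 1 ρ') (ann 1 ρ))
    (hfg : ∀ w ∈ ann 1 ρ', f (g w) = w)
    (hIO : InnOut ρ ρ' f) (hOO : OutOut ρ ρ' f) : False := by
  set η : ℝ := (ρ' - 1) / 2 with hηdef
  have hη0 : 0 < η := by rw [hηdef]; linarith
  obtain ⟨δi, hδi0, hδi⟩ := hIO η hη0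
  obtain ⟨δo, hδo0, hδo⟩ := hOO η hη0
  set δ : ℝ := min (min δi δo) ((ρ - 1) / 2) / 2 with hδdef
  have hδ0 : 0 < δ := by
    rw [hδdef]
    refine div_pos (lt_min (lt_min hδi0 hδo0) (by linarith)) two_pos
  have hδρ : δ < (ρ - 1) / 2 := by
    have := min_le_right (min δi δo) ((ρ - 1) / 2)
    rw [hδdef]; linarith
  have hδδi : δ ≤ δi := by
    have := le_trans (min_le_left (min δi δo) ((ρ - 1) / 2)) (min_le_left δi δo)
    rw [hδdef]; linarith
  have hδδo : δ ≤ δo := by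
    have := le_trans (min_le_left (min δi δo) ((ρ - 1) / 2)) (min_le_right δi δo)
    rw [hδdef]; linarith
  set M : Set ℂ := norm ⁻¹' Set.Icc (1 + δ) (ρ - δ) with hM
  have hMsub : M ⊆ ann 1 ρ := by
    rintro z ⟨h1, h2⟩
    exact ⟨by linarith, by linarith⟩
  have hMcpt : IsCompact M := by
    apply Metric.isCompact_of_isClosed_isBounded
    · exact isClosed_Icc.preimage continuous_norm
    · refine (Metric.isBounded_closedBall (x := (0:ℂ)) (r := ρ)).subset ?_
      intro z hz
      rw [Metric.mem_closedBall, Complex.dist_eq, sub_zero]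
      exact le_trans hz.2 (by linarith)
  have hMne : M.Nonempty := by
    refine ⟨(((1 + ρ) / 2 : ℝ) : ℂ), ?_⟩
    have : ‖(((1 + ρ) / 2 : ℝ) : ℂ)‖ = (1 + ρ) / 2 := by
      rw [Complex.norm_real, Real.norm_eq_abs, _root_.abs_of_nonneg (by linarith)]
    exact ⟨by rw [this]; linarith, by rw [this]; linarith⟩
  obtain ⟨zM, hzM, hzmin⟩ := hMcpt.exists_isMinOn hMne
    ((continuous_norm.comp_continuousOn (hfc.mono hMsub)))
  set c : ℝ := ‖f zM‖ with hc
  have hc1 : 1 < c := (hfmap (hMsub hzM)).1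
  set y : ℝ := min c ((1 + ρ') / 2) with hy
  have hy1 : 1 < y := lt_min hc1 (by linarith)
  have hyρ' : y ≤ (1 + ρ') / 2 := min_le_right _ _
  set x : ℝ := (1 + y) / 2 with hx
  have hx1 : 1 < x := by rw [hx]; linarith
  have hxy : x < y := by rw [hx]; linarith
  have hxρ' : x < ρ' := by linarith
  set w : ℂ := ((x : ℝ) : ℂ) with hw
  have hwabs : ‖w‖ = x := by
    rw [hw, Complex.norm_real, Real.norm_eq_abs, _root_.abs_of_nonneg (by linarith)]
  have hwann : w ∈ ann 1 ρ' := ⟨by rw [hwabs]; exact hx1, by rw [hwabs]; exact hxρ'⟩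
  have hzann : g w ∈ ann 1 ρ := hgmap hwann
  have hfgw : f (g w) = w := hfg w hwann
  rcases lt_or_ge (‖g w‖) (1 + δ) with h | h
  · have := hδi (g w) hzann (by linarith)
    rw [hfgw, hwabs] at this
    have : ρ' - η = (1 + ρ') / 2 := by rw [hηdef]; ring
    linarith
  rcases lt_or_ge (ρ - δ) (‖g w‖) with h' | h'
  · have := hδo (g w) hzann (by linarith)
    rw [hfgw, hwabs] at this
    have : ρ' - η = (1 + ρ') / 2 := by rw [hηdef]; ring
    linarith
  · have hgwM : g w ∈ M := ⟨h, h'⟩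
    have := hzmin hgwM
    simp only [Function.comp_apply, mem_setOf_eq] at this
    rw [hfgw, hwabs] at this
    have h2 : y ≤ c := min_le_left _ _
    linarith









lemma main_II_OO (ρ ρ' : ℝ) (hρ : 1 < ρ) (hρ' : 1 < ρ') (f g : ℂ → ℂ)
    (hf : DifferentiableOn ℂ f (ann 1 ρ)) (hg : DifferentiableOn ℂ g (ann 1 ρ'))
    (hfmap : MapsTo f (ann 1 ρ) (ann 1 ρ')) (hgmap : MapsTo g (ann 1 ρ') (ann 1 ρ))
    (hgf : ∀ z ∈ ann 1 ρ, g (f z) = z) (hfg : ∀ w ∈ ann 1 ρ', f (g w) = w)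
    (hII : InnInn ρ ρ' f) (hOO : OutOut ρ ρ' f) : ρ = ρ' := by
  have hlρ : 0 < Real.log ρ := Real.log_pos hρ
  have hlρ' : 0 < Real.log ρ' := Real.log_pos hρ'
  -- boundary behaviour of g
  have hgII : InnInn ρ' ρ g := by
    rcases dich_inner ρ' ρ hρ' hρ g f hg.continuousOn hf.continuousOn hfmap hfg with h | h
    · exact h
    · exfalso
      obtain ⟨δ1, hδ10, hδ1⟩ := hOO ((ρ' - 1) / 2) (by linarith)
      obtain ⟨δ2, hδ20, hδ2⟩ := h δ1 hδ10
      set x : ℝ := (1 + min (1 + δ2) ((1 + ρ') / 2)) / 2 with hx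
      have hxlt1 : x < 1 + δ2 := by
        have := min_le_left (1 + δ2) ((1 + ρ') / 2)
        have h1 : 1 < min (1 + δ2) ((1 + ρ') / 2) := lt_min (by linarith) (by linarith)
        rw [hx]; linarith
      have hxlt2 : x < (1 + ρ') / 2 := by
        have := min_le_right (1 + δ2) ((1 + ρ') / 2)
        have h1 : 1 < min (1 + δ2) ((1 + ρ') / 2) := lt_min (by linarith) (by linarith)
        rw [hx]; linarith
      have hx1 : 1 < x := by
        have h1 : 1 < min (1 + δ2) ((1 + ρ') / 2) := lt_min (by linarith) (by linarith)
        rw [hx]; linarith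
      set w : ℂ := ((x : ℝ) : ℂ) with hw
      have hwabs : ‖w‖ = x := by
        rw [hw, Complex.norm_real, Real.norm_eq_abs, _root_.abs_of_nonneg (by linarith)]
      have hwann : w ∈ ann 1 ρ' := ⟨by rw [hwabs]; exact hx1, by rw [hwabs]; linarith⟩
      have hgw := hδ2 w hwann (by rw [hwabs]; exact hxlt1)
      have hgwann : g w ∈ ann 1 ρ := hgmap hwann
      have := hδ1 (g w) hgwann hgw
      rw [hfg w hwann, hwabs] at this
      linarith
  have hgOO : OutOut ρ' ρ g := by
    rcases dich_outer ρ' ρ hρ' hρ g f hg.continuousOn hf.continuousOn hfmap hfg with h | h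
    · exact h
    · exfalso
      obtain ⟨δ1, hδ10, hδ1⟩ := hII ((ρ' - 1) / 2) (by linarith)
      obtain ⟨δ2, hδ20, hδ2⟩ := h δ1 hδ10
      set x : ℝ := (max (ρ' - δ2) ((1 + ρ') / 2) + ρ') / 2 with hx
      have hmaxlt : max (ρ' - δ2) ((1 + ρ') / 2) < ρ' := max_lt (by linarith) (by linarith)
      have hxgt1 : ρ' - δ2 < x := by
        have := le_max_left (ρ' - δ2) ((1 + ρ') / 2)
        rw [hx]; linarith
      have hxgt2 : (1 + ρ') / 2 < x := by
        have := le_max_right (ρ' - δ2) ((1 + ρ') / 2)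
        rw [hx]; linarith
      have hxρ' : x < ρ' := by rw [hx]; linarith
      have hx1 : 1 < x := by linarith
      set w : ℂ := ((x : ℝ) : ℂ) with hw
      have hwabs : ‖w‖ = x := by
        rw [hw, Complex.norm_real, Real.norm_eq_abs, _root_.abs_of_nonneg (by linarith)]
      have hwann : w ∈ ann 1 ρ' := ⟨by rw [hwabs]; exact hx1, by rw [hwabs]; exact hxρ'⟩
      have hgw := hδ2 w hwann (by rw [hwabs]; exact hxgt1)
      have hgwann : g w ∈ ann 1 ρ := hgmap hwann
      have := hδ1 (g w) hgwann hgw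
      rw [hfg w hwann, hwabs] at this
      linarith
  -- modulus relations
  have hαf := abs_eq_rpow ρ ρ' hρ hρ' f hf hfmap hII hOO
  have hαg := abs_eq_rpow ρ' ρ hρ' hρ g hg hgmap hgII hgOO
  obtain ⟨n, hn⟩ := alpha_int ρ hρ f hf _ hαf
  obtain ⟨n', hn'⟩ := alpha_int ρ' hρ' g hg _ hαg
  have hn1 : (1:ℝ) ≤ (n:ℝ) := by
    have h0 : (0:ℝ) < (n:ℝ) := by rw [hn]; exact div_pos hlρ' hlρ
    have : (1:ℤ) ≤ n := by exact_mod_cast h0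
    exact_mod_cast this
  have hn'1 : (1:ℝ) ≤ (n':ℝ) := by
    have h0 : (0:ℝ) < (n':ℝ) := by rw [hn']; exact div_pos hlρ hlρ'
    have : (1:ℤ) ≤ n' := by exact_mod_cast h0
    exact_mod_cast this
  have h1 : Real.log ρ ≤ Real.log ρ' := by
    have he : (n:ℝ) * Real.log ρ = Real.log ρ' := by
      rw [hn]; field_simp
    nlinarith [hn1, hlρ]
  have h2 : Real.log ρ' ≤ Real.log ρ := by
    have he : (n':ℝ) * Real.log ρ' = Real.log ρ := by
      rw [hn']; field_simp
    nlinarith [hn'1, hlρ']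
  have : Real.log ρ = Real.log ρ' := le_antisymm h1 h2
  have := congrArg Real.exp this
  rwa [Real.exp_log (by linarith), Real.exp_log (by linarith)] at this

lemma main_norm (ρ ρ' : ℝ) (hρ : 1 < ρ) (hρ' : 1 < ρ') (f g : ℂ → ℂ)
    (hf : DifferentiableOn ℂ f (ann 1 ρ)) (hg : DifferentiableOn ℂ g (ann 1 ρ'))
    (hfmap : MapsTo f (ann 1 ρ) (ann 1 ρ')) (hgmap : MapsTo g (ann 1 ρ') (ann 1 ρ))
    (hgf : ∀ z ∈ ann 1 ρ, g (f z) = z) (hfg : ∀ w ∈ ann 1 ρ', f (g w) = w) :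
    ρ = ρ' := by
  have hρ'0 : (0:ℝ) < ρ' := by linarith
  have hρ'C : ((ρ' : ℝ) : ℂ) ≠ 0 := by
    exact_mod_cast ne_of_gt hρ'0
  have hfne : ∀ z ∈ ann 1 ρ, f z ≠ 0 := by
    intro z hz h0
    have := (hfmap hz).1
    rw [h0] at this; simp at this; linarith
  rcases dich_inner ρ ρ' hρ hρ' f g hf.continuousOn hg.continuousOn hgmap hgf with hI | hI <;>
    rcases dich_outer ρ ρ' hρ hρ' f g hf.continuousOn hg.continuousOn hgmap hgf with hO | hO
  · exact main_II_OO ρ ρ' hρ hρ' f g hf hg hfmap hgmap hgf hfg hI hO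
  · exact absurd (excl_inn ρ ρ' hρ hρ' f g hf.continuousOn hfmap hgmap hfg hI hO) not_false
  · exact absurd (excl_out ρ ρ' hρ hρ' f g hf.continuousOn hfmap hgmap hfg hI hO) not_false
  · -- invert : f1 z = ρ' / f z
    set f1 : ℂ → ℂ := fun z => ((ρ' : ℝ) : ℂ) / f z with hf1def
    set g1 : ℂ → ℂ := fun w => g (((ρ' : ℝ) : ℂ) / w) with hg1def
    have hinv_abs : ∀ w : ℂ, 1 < ‖w‖ → ‖w‖ < ρ' →
        (1 < ‖((ρ' : ℝ) : ℂ) / w‖ ∧ ‖((ρ' : ℝ) : ℂ) / w‖ < ρ') := by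
      intro w h1 h2
      have h0 : 0 < ‖w‖ := lt_trans one_pos h1
      rw [norm_div, Complex.norm_real, Real.norm_eq_abs, _root_.abs_of_nonneg hρ'0.le]
      constructor
      · rw [lt_div_iff₀ h0, one_mul]; exact h2
      · rw [div_lt_iff₀ h0]; nlinarith
    have hinvmap : MapsTo (fun w => ((ρ' : ℝ) : ℂ) / w) (ann 1 ρ') (ann 1 ρ') := by
      intro w hw
      exact hinv_abs w hw.1 hw.2
    have hf1 : DifferentiableOn ℂ f1 (ann 1 ρ) :=
      (differentiableOn_const _).div hf hfne
    have hf1map : MapsTo f1 (ann 1 ρ) (ann 1 ρ') := by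
      intro z hz
      exact hinv_abs (f z) (hfmap hz).1 (hfmap hz).2
    have hinvdiff : DifferentiableOn ℂ (fun w => ((ρ' : ℝ) : ℂ) / w) (ann 1 ρ') := by
      refine (differentiableOn_const _).div differentiableOn_id ?_
      intro w hw h0
      have := hw.1
      rw [h0] at this; simp at this; linarith
    have hg1 : DifferentiableOn ℂ g1 (ann 1 ρ') :=
      hg.comp hinvdiff hinvmap
    have hg1map : MapsTo g1 (ann 1 ρ') (ann 1 ρ) := fun w hw => hgmap (hinvmap hw)
    have hinvinv : ∀ w : ℂ, w ≠ 0 → ((ρ' : ℝ) : ℂ) / (((ρ' : ℝ) : ℂ) / w) = w := by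
      intro w hw
      field_simp
    have hg1f1 : ∀ z ∈ ann 1 ρ, g1 (f1 z) = z := by
      intro z hz
      have : g1 (f1 z) = g (((ρ' : ℝ) : ℂ) / (((ρ' : ℝ) : ℂ) / f z)) := rfl
      rw [this, hinvinv (f z) (hfne z hz)]
      exact hgf z hz
    have hf1g1 : ∀ w ∈ ann 1 ρ', f1 (g1 w) = w := by
      intro w hw
      have hw0 : w ≠ 0 := by
        intro h0
        have := hw.1
        rw [h0] at this; simp at this; linarith
      have : f1 (g1 w) = ((ρ' : ℝ) : ℂ) / f (g (((ρ' : ℝ) : ℂ) / w)) := rfl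
      rw [this, hfg _ (hinvmap hw), hinvinv w hw0]
    have habsf1 : ∀ z : ℂ, f z ≠ 0 → ‖f1 z‖ = ρ' / ‖f z‖ := by
      intro z hz
      rw [hf1def]
      simp only
      rw [norm_div, Complex.norm_real, Real.norm_eq_abs, _root_.abs_of_nonneg hρ'0.le]
    have hf1II : InnInn ρ ρ' f1 := by
      intro ηs hηs
      have hη0 : 0 < min ηs ((ρ' - 1) / 2) := lt_min hηs (by linarith)
      obtain ⟨δ, hδ0, hδ⟩ := hI (min ηs ((ρ' - 1) / 2)) hη0
      refine ⟨δ, hδ0, ?_⟩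
      intro z hz hzδ
      have hfz := hδ z hz hzδ
      have hmle1 : min ηs ((ρ' - 1) / 2) ≤ (ρ' - 1) / 2 := min_le_right _ _
      have hmle2 : min ηs ((ρ' - 1) / 2) ≤ ηs := min_le_left _ _
      have hpos : 0 < ρ' - min ηs ((ρ' - 1) / 2) := by linarith
      rw [habsf1 z (hfne z hz)]
      have h1 : ρ' / ‖f z‖ < ρ' / (ρ' - min ηs ((ρ' - 1) / 2)) :=
        div_lt_div_of_pos_left hρ'0 hpos hfz
      have h2 : ρ' / (ρ' - min ηs ((ρ' - 1) / 2)) ≤ 1 + ηs := by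
        rw [div_le_iff₀ hpos]
        nlinarith
      linarith
    have hf1OO : OutOut ρ ρ' f1 := by
      intro ηs hηs
      have hη0 : 0 < ηs / ρ' := div_pos hηs hρ'0
      obtain ⟨δ, hδ0, hδ⟩ := hO (ηs / ρ') hη0
      refine ⟨δ, hδ0, ?_⟩
      intro z hz hzδ
      have hfz := hδ z hz hzδ
      have hfz1 : (1:ℝ) < ‖f z‖ := (hfmap hz).1
      have hfz0 : (0:ℝ) < ‖f z‖ := lt_trans one_pos hfz1
      rw [habsf1 z (hfne z hz)]
      have h1 : ρ' / (1 + ηs / ρ') < ρ' / ‖f z‖ :=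
        div_lt_div_of_pos_left hρ'0 hfz0 hfz
      have h2 : ρ' - ηs ≤ ρ' / (1 + ηs / ρ') := by
        rw [le_div_iff₀ (by positivity)]
        have hηρ : ρ' * (ηs / ρ') = ηs := mul_div_cancel₀ _ (ne_of_gt hρ'0)
        nlinarith
      linarith
    exact main_II_OO ρ ρ' hρ hρ' f1 g1 hf1 hg1 hf1map hg1map hg1f1 hf1g1 hf1II hf1OO


lemma scale_mem {a b : ℝ} (ha : 0 < a) {z : ℂ} :
    (a : ℂ) * z ∈ ann a b ↔ z ∈ ann 1 (b / a) := by
  have habs : ‖(a : ℂ) * z‖ = a * ‖z‖ := by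
    rw [norm_mul, Complex.norm_real, Real.norm_eq_abs, _root_.abs_of_nonneg ha.le]
  constructor
  · rintro ⟨h1, h2⟩
    rw [habs] at h1 h2
    constructor
    · nlinarith
    · rw [lt_div_iff₀ ha, mul_comm]
      exact h2
  · rintro ⟨h1, h2⟩
    refine ⟨?_, ?_⟩ <;> rw [habs]
    · nlinarith
    · rw [lt_div_iff₀ ha, mul_comm] at h2
      exact h2

lemma div_mem {a b : ℝ} (ha : 0 < a) {z : ℂ} (hz : z ∈ ann a b) :
    z / (a : ℂ) ∈ ann 1 (b / a) := by
  have h0 : ((a : ℝ) : ℂ) ≠ 0 := by exact_mod_cast ne_of_gt ha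
  have : (a : ℂ) * (z / (a : ℂ)) = z := by field_simp
  rw [← scale_mem ha, this]
  exact hz
end AnnuliProof

open AnnuliProof in
/-- Two annuli `{r < |z| < R}` and `{r' < |z| < R'}` are biholomorphically equivalent
if and only if they have the same modulus, i.e. `R/r = R'/r'`. -/
theorem annuli_biholomorphic_iff_same_modulus (r R r' R' : ℝ)
    (hr : 0 < r) (hrR : r < R) (hr' : 0 < r') (hrR' : r' < R') :
    (∃ f g : ℂ → ℂ,
      DifferentiableOn ℂ f {z : ℂ | r < ‖z‖ ∧ ‖z‖ < R} ∧
      DifferentiableOn ℂ g {z : ℂ | r' < ‖z‖ ∧ ‖z‖ < R'} ∧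
      Set.MapsTo f {z : ℂ | r < ‖z‖ ∧ ‖z‖ < R}
        {z : ℂ | r' < ‖z‖ ∧ ‖z‖ < R'} ∧
      Set.MapsTo g {z : ℂ | r' < ‖z‖ ∧ ‖z‖ < R'}
        {z : ℂ | r < ‖z‖ ∧ ‖z‖ < R} ∧
      (∀ z ∈ {z : ℂ | r < ‖z‖ ∧ ‖z‖ < R}, g (f z) = z) ∧
      (∀ z ∈ {z : ℂ | r' < ‖z‖ ∧ ‖z‖ < R'}, f (g z) = z)) ↔
    R / r = R' / r' := by
  have hrC : ((r : ℝ) : ℂ) ≠ 0 := by exact_mod_cast ne_of_gt hr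
  have hr'C : ((r' : ℝ) : ℂ) ≠ 0 := by exact_mod_cast ne_of_gt hr'
  have hann : {z : ℂ | r < ‖z‖ ∧ ‖z‖ < R} = ann r R := rfl
  have hann' : {z : ℂ | r' < ‖z‖ ∧ ‖z‖ < R'} = ann r' R' := rfl
  constructor
  · rintro ⟨f, g, hf, hg, hfmap, hgmap, hgf, hfg⟩
    rw [hann] at hf hfmap hgmap hgf
    rw [hann'] at hg hfmap hgmap hfg
    have hρ : 1 < R / r := (one_lt_div hr).mpr hrR
    have hρ' : 1 < R' / r' := (one_lt_div hr').mpr hrR'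
    set F : ℂ → ℂ := fun z => f ((r : ℂ) * z) / (r' : ℂ) with hF
    set G : ℂ → ℂ := fun w => g ((r' : ℂ) * w) / (r : ℂ) with hG
    have hmulr : MapsTo (fun z : ℂ => (r : ℂ) * z) (ann 1 (R / r)) (ann r R) :=
      fun z hz => (scale_mem hr).mpr hz
    have hmulr' : MapsTo (fun w : ℂ => (r' : ℂ) * w) (ann 1 (R' / r')) (ann r' R') :=
      fun w hw => (scale_mem hr').mpr hw
    have hFdiff : DifferentiableOn ℂ F (ann 1 (R / r)) := by
      refine DifferentiableOn.div_const ?_ _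
      exact hf.comp ((differentiable_id.const_mul _).differentiableOn) hmulr
    have hGdiff : DifferentiableOn ℂ G (ann 1 (R' / r')) := by
      refine DifferentiableOn.div_const ?_ _
      exact hg.comp ((differentiable_id.const_mul _).differentiableOn) hmulr'
    have hFmap : MapsTo F (ann 1 (R / r)) (ann 1 (R' / r')) :=
      fun z hz => div_mem hr' (hfmap (hmulr hz))
    have hGmap : MapsTo G (ann 1 (R' / r')) (ann 1 (R / r)) :=
      fun w hw => div_mem hr (hgmap (hmulr' hw))
    have hGF : ∀ z ∈ ann 1 (R / r), G (F z) = z := by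
      intro z hz
      have h1 : (r' : ℂ) * (f ((r : ℂ) * z) / (r' : ℂ)) = f ((r : ℂ) * z) := by
        field_simp
      have : G (F z) = g ((r' : ℂ) * (f ((r : ℂ) * z) / (r' : ℂ))) / (r : ℂ) := rfl
      rw [this, h1, hgf _ (hmulr hz)]
      field_simp
    have hFG : ∀ w ∈ ann 1 (R' / r'), F (G w) = w := by
      intro w hw
      have h1 : (r : ℂ) * (g ((r' : ℂ) * w) / (r : ℂ)) = g ((r' : ℂ) * w) := by
        field_simp
      have : F (G w) = f ((r : ℂ) * (g ((r' : ℂ) * w) / (r : ℂ))) / (r' : ℂ) := rfl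
      rw [this, h1, hfg _ (hmulr' hw)]
      field_simp
    exact main_norm (R / r) (R' / r') hρ hρ' F G hFdiff hGdiff hFmap hGmap hGF hFG
  · intro h
    have hcross : R * r' = R' * r := by
      rw [div_eq_div_iff (ne_of_gt hr) (ne_of_gt hr')] at h
      exact h
    refine ⟨fun z => ((r' / r : ℝ) : ℂ) * z, fun w => ((r / r' : ℝ) : ℂ) * w,
      (differentiable_id.const_mul _).differentiableOn,
      (differentiable_id.const_mul _).differentiableOn, ?_, ?_, ?_, ?_⟩
    · rintro z ⟨h1, h2⟩
      have habs : ‖((r' / r : ℝ) : ℂ) * z‖ = r' / r * ‖z‖ := by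
        rw [norm_mul, Complex.norm_real, Real.norm_eq_abs, _root_.abs_of_nonneg (by positivity)]
      constructor
      · rw [habs, div_mul_eq_mul_div, lt_div_iff₀ hr]
        calc r' * r = r * r' := by ring
          _ < ‖z‖ * r' := by exact (mul_lt_mul_iff_left₀ hr').mpr h1
          _ = r' * ‖z‖ := by ring
      · rw [habs, div_mul_eq_mul_div, div_lt_iff₀ hr]
        calc r' * ‖z‖ < r' * R := (mul_lt_mul_iff_right₀ hr').mpr h2
          _ = R * r' := by ring
          _ = R' * r := hcross
    · rintro w ⟨h1, h2⟩
      have habs : ‖((r / r' : ℝ) : ℂ) * w‖ = r / r' * ‖w‖ := by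
        rw [norm_mul, Complex.norm_real, Real.norm_eq_abs, _root_.abs_of_nonneg (by positivity)]
      constructor
      · rw [habs, div_mul_eq_mul_div, lt_div_iff₀ hr']
        calc r * r' = r' * r := by ring
          _ < ‖w‖ * r := by exact (mul_lt_mul_iff_left₀ hr).mpr h1
          _ = r * ‖w‖ := by ring
      · rw [habs, div_mul_eq_mul_div, div_lt_iff₀ hr']
        calc r * ‖w‖ < r * R' := (mul_lt_mul_iff_right₀ hr).mpr h2
          _ = R' * r := by ring
          _ = R * r' := hcross.symm
    · intro z _
      have hone : ((r / r' : ℝ) : ℂ) * ((r' / r : ℝ) : ℂ) = 1 := by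
        rw [← Complex.ofReal_mul]
        have : (r / r') * (r' / r) = (1:ℝ) := by field_simp
        rw [this, Complex.ofReal_one]
      show ((r / r' : ℝ) : ℂ) * (((r' / r : ℝ) : ℂ) * z) = z
      rw [← mul_assoc, hone, one_mul]
    · intro w _
      have hone : ((r' / r : ℝ) : ℂ) * ((r / r' : ℝ) : ℂ) = 1 := by
        rw [← Complex.ofReal_mul]
        have : (r' / r) * (r / r') = (1:ℝ) := by field_simp
        rw [this, Complex.ofReal_one]
      show ((r' / r : ℝ) : ℂ) * (((r / r' : ℝ) : ℂ) * w) = w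
      rw [← mul_assoc, hone, one_mul]
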